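/- Let ω ∈ L¹(ℝ²) be radial, f 1-Lipschitz with f(0)=0, μ‖ω‖₁ < 1, and let Ψ(I) be the unique solution of Ψ(I) = I + μ ω ∗ f(Ψ(I)) in L^p(ℝ²). Then Ψ is E(2)-equivariant: Ψ(T_g I) = T_g Ψ(I) for every Euclidean motion g and every I ∈ L^p(ℝ²). In particular, if I is invariant under a subgroup Γ of E(2), then so is Ψ(I). -/

import Mathlib

open MeasureTheory
open scoped Convolution ENNReal

noncomputable section

local notation "E2" => EuclideanSpace ℝ (Fin 2)

/-- Tonelli computation for a convolution-type double integral. -/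
lemma PsiAux.lintegral_conv (W H : E2 → ℝ≥0∞) (hW : Measurable W) (hH : Measurable H) :
    ∫⁻ x, ∫⁻ t, W t * H (x - t) = (∫⁻ t, W t) * ∫⁻ y, H y := by
  have hmeas : Measurable (Function.uncurry fun x t => W t * H (x - t)) :=
    (hW.comp measurable_snd).mul (hH.comp (measurable_fst.sub measurable_snd))
  rw [lintegral_lintegral_swap hmeas.aemeasurable]
  have h1 : ∀ t : E2, ∫⁻ x, W t * H (x - t) = W t * ∫⁻ y, H y := by
    intro t
    have hm : Measurable fun x : E2 => H (x - t) := by fun_prop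
    rw [lintegral_const_mul _ hm]
    congr 1
    exact (measurePreserving_sub_right volume t).lintegral_comp hH
  simp_rw [h1]
  rw [lintegral_mul_const _ hW]

/-- Young's inequality for the convolution, `ℝ≥0∞`-version. -/
lemma PsiAux.young {q : ℝ} (hq : 1 ≤ q) (W H : E2 → ℝ≥0∞) (hW : Measurable W)
    (hH : Measurable H) :
    ∫⁻ x, (∫⁻ t, W t * H (x - t)) ^ q ≤ (∫⁻ t, W t) ^ q * ∫⁻ y, H y ^ q := by
  rcases eq_or_lt_of_le hq with h1 | h1
  · simp only [← h1, ENNReal.rpow_one]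
    exact (PsiAux.lintegral_conv W H hW hH).le
  · have hcon : (q.conjExponent).HolderConjugate q := (Real.HolderConjugate.conjExponent h1).symm
    set q' : ℝ := q.conjExponent with hq'def
    have hq0 : 0 < q := lt_trans one_pos h1
    have hq'0 : 0 < q' := hcon.pos
    have hq1' : q - 1 ≠ 0 := sub_ne_zero.2 h1.ne'
    have hHq : Measurable fun y => H y ^ q := hH.pow_const q
    have key : ∀ x, (∫⁻ t, W t * H (x - t)) ≤
        (∫⁻ t, W t) ^ (1 / q') * (∫⁻ t, W t * H (x - t) ^ q) ^ (1 / q) := by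
      intro x
      have heq : ∀ t, W t * H (x - t) =
          ((fun t => W t ^ (1 / q')) * fun t => W t ^ (1 / q) * H (x - t)) t := by
        intro t
        simp only [Pi.mul_apply]
        rw [← mul_assoc, ← ENNReal.rpow_add_of_nonneg _ _ (by positivity) (by positivity),
          one_div, one_div, hcon.inv_add_inv_eq_one, ENNReal.rpow_one]
      calc ∫⁻ t, W t * H (x - t)
          = ∫⁻ t, ((fun t => W t ^ (1 / q')) * fun t => W t ^ (1 / q) * H (x - t)) t :=
            lintegral_congr heq
        _ ≤ (∫⁻ t, (W t ^ (1 / q')) ^ q') ^ (1 / q') *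
            (∫⁻ t, (W t ^ (1 / q) * H (x - t)) ^ q) ^ (1 / q) :=
            ENNReal.lintegral_mul_le_Lp_mul_Lq volume hcon
              (hW.pow_const _).aemeasurable
              ((hW.pow_const _).mul (by fun_prop)).aemeasurable
        _ = (∫⁻ t, W t) ^ (1 / q') * (∫⁻ t, W t * H (x - t) ^ q) ^ (1 / q) := by
            congr 1
            · congr 1
              refine lintegral_congr fun t => ?_
              rw [← ENNReal.rpow_mul, one_div, inv_mul_cancel₀ hq'0.ne', ENNReal.rpow_one]
            · congr 1
              refine lintegral_congr fun t => ?_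
              rw [ENNReal.mul_rpow_of_nonneg _ _ hq0.le, ← ENNReal.rpow_mul, one_div,
                inv_mul_cancel₀ hq0.ne', ENNReal.rpow_one]
    have hin : Measurable fun x : E2 => ∫⁻ t, W t * H (x - t) ^ q :=
      Measurable.lintegral_prod_right' (f := fun z : E2 × E2 => W z.2 * H (z.1 - z.2) ^ q)
        ((hW.comp measurable_snd).mul (hHq.comp (measurable_fst.sub measurable_snd)))
    calc ∫⁻ x, (∫⁻ t, W t * H (x - t)) ^ q
        ≤ ∫⁻ x, (∫⁻ t, W t) ^ (q / q') * (∫⁻ t, W t * H (x - t) ^ q) := by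
          refine lintegral_mono fun x => ?_
          calc (∫⁻ t, W t * H (x - t)) ^ q
              ≤ ((∫⁻ t, W t) ^ (1 / q') * (∫⁻ t, W t * H (x - t) ^ q) ^ (1 / q)) ^ q :=
                ENNReal.rpow_le_rpow (key x) hq0.le
            _ = (∫⁻ t, W t) ^ (q / q') * (∫⁻ t, W t * H (x - t) ^ q) := by
                rw [ENNReal.mul_rpow_of_nonneg _ _ hq0.le, ← ENNReal.rpow_mul,
                  ← ENNReal.rpow_mul, show (1 : ℝ) / q' * q = q / q' by ring,
                  show (1 : ℝ) / q * q = 1 by field_simp, ENNReal.rpow_one]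
      _ = (∫⁻ t, W t) ^ (q / q') * ((∫⁻ t, W t) * ∫⁻ y, H y ^ q) := by
          rw [lintegral_const_mul _ hin, PsiAux.lintegral_conv W _ hW hHq]
      _ = (∫⁻ t, W t) ^ q * ∫⁻ y, H y ^ q := by
          rw [← mul_assoc]
          congr 1
          have hexp : q / q' + 1 = q := by
            have h : q' = q / (q - 1) := rfl
            rw [h]
            rw [div_div_eq_mul_div, mul_comm, mul_div_assoc, div_self hq0.ne', mul_one,
              sub_add_cancel]
          calc (∫⁻ t, W t) ^ (q / q') * (∫⁻ t, W t)
              = (∫⁻ t, W t) ^ (q / q') * (∫⁻ t, W t) ^ (1 : ℝ) := by rw [ENNReal.rpow_one]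
            _ = (∫⁻ t, W t) ^ (q / q' + 1) :=
                (ENNReal.rpow_add_of_nonneg _ _ (by positivity) zero_le_one).symm
            _ = (∫⁻ t, W t) ^ q := by rw [hexp]

/-- Uniqueness of the `L^p` fixed point of the contraction. -/
lemma PsiAux.unique {p : ℝ≥0∞} (hp : 1 ≤ p) {ω : E2 → ℝ} (hω : Integrable ω)
    {f : ℝ → ℝ} (hf : LipschitzWith 1 f)
    {μ : ℝ} (hμ0 : 0 < μ) (hμ : μ * (∫ x, |ω x|) < 1)
    {I u v : E2 → ℝ} (hu : MemLp u p volume) (hv : MemLp v p volume)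
    (hfu : MemLp (f ∘ u) p volume) (hfv : MemLp (f ∘ v) p volume)
    (hue : u =ᵐ[volume] fun x => I x + μ * (ω ⋆ (f ∘ u)) x)
    (hve : v =ᵐ[volume] fun x => I x + μ * (ω ⋆ (f ∘ v)) x) :
    u =ᵐ[volume] v := by
  have hp0 : p ≠ 0 := (lt_of_lt_of_le zero_lt_one hp).ne'
  -- measurable version of the kernel weight
  set ω' : E2 → ℝ := hω.1.mk ω with hω'def
  have hω'm : Measurable ω' := hω.1.measurable_mk
  have hωae : ω =ᵐ[volume] ω' := hω.1.ae_eq_mk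
  set W : E2 → ℝ≥0∞ := fun t => (‖ω' t‖₊ : ℝ≥0∞) with hWdef
  have hWm : Measurable W := hω'm.nnnorm.coe_nnreal_ennreal
  have hWae : ∀ᵐ t ∂(volume : Measure E2), (‖ω t‖₊ : ℝ≥0∞) = W t := by
    filter_upwards [hωae] with t ht
    simp only [hWdef, ht]
  have hWfin : ∫⁻ t, W t < ∞ := by
    rw [← lintegral_congr_ae hWae]; exact hω.2
  have hWeq : ∫⁻ t, W t = ENNReal.ofReal (∫ x, |ω x|) := by
    rw [← lintegral_congr_ae hWae, show (∫⁻ x, (‖ω x‖₊ : ℝ≥0∞)) = ∫⁻ x, ‖ω x‖ₑ from rfl,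
      ← ofReal_integral_norm_eq_lintegral_enorm hω]
    simp [Real.norm_eq_abs]
  have hrlt : ENNReal.ofReal μ * ∫⁻ t, W t < 1 := by
    rw [hWeq, ← ENNReal.ofReal_mul hμ0.le]
    exact ENNReal.ofReal_lt_one.2 hμ
  -- convolution existence
  have hex : ∀ (h : E2 → ℝ), MemLp h p volume →
      ∀ᵐ x ∂(volume : Measure E2), Integrable (fun t => ω t * h (x - t)) := by
    intro h hh
    have hh'm : Measurable (hh.1.mk h) := hh.1.measurable_mk
    have hhae : h =ᵐ[volume] hh.1.mk h := hh.1.ae_eq_mk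
    set H : E2 → ℝ≥0∞ := fun y => (‖hh.1.mk h y‖₊ : ℝ≥0∞) with hHdef
    have hHm : Measurable H := hh'm.nnnorm.coe_nnreal_ennreal
    have hHae : ∀ᵐ y ∂(volume : Measure E2), (‖h y‖₊ : ℝ≥0∞) = H y := by
      filter_upwards [hhae] with y hy
      simp only [hHdef, hy]
    have hfin : ∀ᵐ x ∂(volume : Measure E2), ∫⁻ t, W t * H (x - t) < ∞ := by
      by_cases hptop : p = ∞
      · have hM : essSup H volume < ∞ := by
          have h1 : essSup H volume = eLpNormEssSup h volume := by
            rw [show eLpNormEssSup h volume = essSup (fun y => (‖h y‖₊ : ℝ≥0∞)) volume from rfl]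
            exact (essSup_congr_ae hHae).symm
          rw [h1, ← eLpNorm_exponent_top]
          exact hptop ▸ hh.2
        refine Filter.Eventually.of_forall fun x => ?_
        calc ∫⁻ t, W t * H (x - t) ≤ ∫⁻ t, W t * essSup H volume := by
              refine lintegral_mono_ae ?_
              filter_upwards [(Measure.measurePreserving_sub_left volume x).quasiMeasurePreserving.ae
                (ENNReal.ae_le_essSup H)] with t ht
              exact mul_le_mul_right ht _
          _ = (∫⁻ t, W t) * essSup H volume := lintegral_mul_const _ hWm
          _ < ∞ := ENNReal.mul_lt_top hWfin hM
      · set q := p.toReal with hqdef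
        have hq1 : (1 : ℝ) ≤ q := by
          rw [show (1 : ℝ) = (1 : ℝ≥0∞).toReal by simp]
          exact ENNReal.toReal_mono hptop hp
        have hq0 : (0 : ℝ) < q := lt_of_lt_of_le one_pos hq1
        have hHq : ∫⁻ y, H y ^ q < ∞ := by
          have h2 := hh.2
          rw [eLpNorm_eq_lintegral_rpow_enorm_toReal hp0 hptop] at h2
          have h3 : ∫⁻ y, (‖h y‖₊ : ℝ≥0∞) ^ q < ∞ :=
            (ENNReal.rpow_lt_top_iff_of_pos (by positivity)).1 h2
          refine lt_of_eq_of_lt (lintegral_congr_ae ?_) h3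
          filter_upwards [hHae] with y hy
          rw [hy]
        have hconvm : Measurable fun x : E2 => ∫⁻ t, W t * H (x - t) :=
          Measurable.lintegral_prod_right' (f := fun z : E2 × E2 => W z.2 * H (z.1 - z.2))
            ((hWm.comp measurable_snd).mul (hHm.comp (measurable_fst.sub measurable_snd)))
        have hI : ∫⁻ x, (∫⁻ t, W t * H (x - t)) ^ q < ∞ :=
          lt_of_le_of_lt (PsiAux.young hq1 W H hWm hHm)
            (ENNReal.mul_lt_top (ENNReal.rpow_lt_top_of_nonneg hq0.le hWfin.ne) hHq)
        have := ae_lt_top (hconvm.pow_const q) hI.ne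
        filter_upwards [this] with x hx
        exact (ENNReal.rpow_lt_top_iff_of_pos hq0).1 hx
    filter_upwards [hfin] with x hx
    constructor
    · exact hω.1.mul (hh.1.comp_quasiMeasurePreserving
        (Measure.measurePreserving_sub_left volume x).quasiMeasurePreserving)
    · have heq : ∫⁻ t, (‖ω t * h (x - t)‖₊ : ℝ≥0∞) = ∫⁻ t, W t * H (x - t) := by
        refine lintegral_congr_ae ?_
        filter_upwards [hWae,
          (Measure.measurePreserving_sub_left volume x).quasiMeasurePreserving.ae hHae] with t h1 h2
        rw [nnnorm_mul, ENNReal.coe_mul, h1, h2]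
      exact (lt_of_eq_of_lt heq hx : (∫⁻ t, (‖ω t * h (x - t)‖₊ : ℝ≥0∞)) < ⊤)
  -- the pointwise a.e. contraction bound
  set w : E2 → ℝ := fun x => u x - v x with hwdef
  have hw : MemLp w p volume := hu.sub hv
  have hw'm : Measurable (hw.1.mk w) := hw.1.measurable_mk
  have hwae : w =ᵐ[volume] hw.1.mk w := hw.1.ae_eq_mk
  set D : E2 → ℝ≥0∞ := fun y => (‖hw.1.mk w y‖₊ : ℝ≥0∞) with hDdef
  have hDm : Measurable D := hw'm.nnnorm.coe_nnreal_ennreal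
  have hDae : ∀ᵐ y ∂(volume : Measure E2), (‖w y‖₊ : ℝ≥0∞) = D y := by
    filter_upwards [hwae] with y hy
    simp only [hDdef, hy]
  have hbound : ∀ᵐ x ∂(volume : Measure E2),
      (‖w x‖₊ : ℝ≥0∞) ≤ ENNReal.ofReal μ * ∫⁻ t, W t * D (x - t) := by
    filter_upwards [hue, hve, hex _ hfu, hex _ hfv] with x h1 h2 h3 h4
    have hsub : w x = μ * ∫ t, ω t * (f (u (x - t)) - f (v (x - t))) := by
      have hc : (ω ⋆ (f ∘ u)) x - (ω ⋆ (f ∘ v)) x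
          = ∫ t, ω t * (f (u (x - t)) - f (v (x - t))) := by
        simp only [convolution_def, ContinuousLinearMap.lsmul_apply, smul_eq_mul]
        rw [← integral_sub h3 h4]
        congr 1
        ext t
        simp only [Function.comp_apply]
        ring
      rw [hwdef]
      simp only
      rw [h1, h2, ← hc]
      ring
    calc (‖w x‖₊ : ℝ≥0∞)
        = (‖μ‖₊ : ℝ≥0∞) * ‖∫ t, ω t * (f (u (x - t)) - f (v (x - t)))‖₊ := by
          rw [hsub, nnnorm_mul, ENNReal.coe_mul]
      _ ≤ ENNReal.ofReal μ * ∫⁻ t, (‖ω t * (f (u (x - t)) - f (v (x - t)))‖₊ : ℝ≥0∞) := by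
          rw [show (‖μ‖₊ : ℝ≥0∞) = ‖μ‖ₑ from rfl, Real.enorm_eq_ofReal hμ0.le]
          exact mul_le_mul_right (enorm_integral_le_lintegral_enorm _) _
      _ ≤ ENNReal.ofReal μ * ∫⁻ t, W t * D (x - t) := by
          refine mul_le_mul_right ?_ _
          refine lintegral_mono_ae ?_
          filter_upwards [hWae,
            (Measure.measurePreserving_sub_left volume x).quasiMeasurePreserving.ae hDae] with t h5 h6
          rw [nnnorm_mul, ENNReal.coe_mul]
          refine mul_le_mul (le_of_eq h5) ?_ (by positivity) (by positivity)
          rw [← h6]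
          refine ENNReal.coe_le_coe.2 ?_
          calc ‖f (u (x - t)) - f (v (x - t))‖₊ = nndist (f (u (x - t))) (f (v (x - t))) :=
                (nndist_eq_nnnorm _ _).symm
            _ ≤ 1 * nndist (u (x - t)) (v (x - t)) := hf.nndist_le _ _
            _ = ‖w (x - t)‖₊ := by rw [one_mul, nndist_eq_nnnorm]
  -- contraction in `L^p` implies the norm vanishes
  have heLp : eLpNorm w p volume = 0 := by
    by_cases hptop : p = ∞
    · set M := essSup D volume with hMdef
      have hMeq : M = eLpNorm w ∞ volume := by
        rw [eLpNorm_exponent_top,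
          show eLpNormEssSup w volume = essSup (fun y => (‖w y‖₊ : ℝ≥0∞)) volume from rfl]
        exact (essSup_congr_ae hDae).symm
      have hMfin : M < ∞ := by rw [hMeq]; exact hptop ▸ hw.2
      have step : M ≤ (ENNReal.ofReal μ * ∫⁻ t, W t) * M := by
        refine essSup_le_of_ae_le _ ?_
        filter_upwards [hbound, hDae] with x hx hDx
        calc D x ≤ ENNReal.ofReal μ * ∫⁻ t, W t * D (x - t) := hDx ▸ hx
          _ ≤ ENNReal.ofReal μ * ((∫⁻ t, W t) * M) := by
              refine mul_le_mul_right ?_ _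
              calc ∫⁻ t, W t * D (x - t) ≤ ∫⁻ t, W t * M := by
                    refine lintegral_mono_ae ?_
                    filter_upwards [(Measure.measurePreserving_sub_left volume x).quasiMeasurePreserving.ae
                      (ENNReal.ae_le_essSup D)] with t ht
                    exact mul_le_mul_right ht _
                _ = (∫⁻ t, W t) * M := lintegral_mul_const _ hWm
          _ = (ENNReal.ofReal μ * ∫⁻ t, W t) * M := by rw [mul_assoc]
      have hM0 : M = 0 := by
        by_contra hM0
        have hlt : (ENNReal.ofReal μ * ∫⁻ t, W t) * M < M := by
          calc (ENNReal.ofReal μ * ∫⁻ t, W t) * M < 1 * M :=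
                ENNReal.mul_lt_mul_left hM0 hMfin.ne hrlt
            _ = M := one_mul M
        exact absurd step (not_le.2 hlt)
      rw [hptop, ← hMeq, hM0]
    · set q := p.toReal with hqdef
      have hq1 : (1 : ℝ) ≤ q := by
        rw [show (1 : ℝ) = (1 : ℝ≥0∞).toReal by simp]
        exact ENNReal.toReal_mono hptop hp
      have hq0 : (0 : ℝ) < q := lt_of_lt_of_le one_pos hq1
      set A := ∫⁻ y, D y ^ q with hAdef
      have hAeq : ∫⁻ y, (‖w y‖₊ : ℝ≥0∞) ^ q = A := by
        refine lintegral_congr_ae ?_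
        filter_upwards [hDae] with y hy
        rw [hy]
      have hAfin : A < ∞ := by
        have h2 := hw.2
        rw [eLpNorm_eq_lintegral_rpow_enorm_toReal hp0 hptop] at h2
        have h3 : ∫⁻ y, (‖w y‖₊ : ℝ≥0∞) ^ q < ∞ :=
          (ENNReal.rpow_lt_top_iff_of_pos (by positivity)).1 h2
        exact lt_of_eq_of_lt hAeq.symm h3
      have hconvDm : Measurable fun x : E2 => ∫⁻ t, W t * D (x - t) :=
        Measurable.lintegral_prod_right' (f := fun z : E2 × E2 => W z.2 * D (z.1 - z.2))
          ((hWm.comp measurable_snd).mul (hDm.comp (measurable_fst.sub measurable_snd)))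
      have step : A ≤ (ENNReal.ofReal μ * ∫⁻ t, W t) ^ q * A := by
        calc A ≤ ∫⁻ x, (ENNReal.ofReal μ * ∫⁻ t, W t * D (x - t)) ^ q := by
              refine lintegral_mono_ae ?_
              filter_upwards [hbound, hDae] with x hx hDx
              exact ENNReal.rpow_le_rpow (hDx ▸ hx) hq0.le
          _ = ENNReal.ofReal μ ^ q * ∫⁻ x, (∫⁻ t, W t * D (x - t)) ^ q := by
              simp_rw [ENNReal.mul_rpow_of_nonneg _ _ hq0.le]
              rw [lintegral_const_mul _ (hconvDm.pow_const q)]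
          _ ≤ ENNReal.ofReal μ ^ q * ((∫⁻ t, W t) ^ q * A) :=
              mul_le_mul_right (PsiAux.young hq1 W D hWm hDm) _
          _ = (ENNReal.ofReal μ * ∫⁻ t, W t) ^ q * A := by
              rw [ENNReal.mul_rpow_of_nonneg _ _ hq0.le, mul_assoc]
      have hA0 : A = 0 := by
        by_contra h0
        have hlt : (ENNReal.ofReal μ * ∫⁻ t, W t) ^ q * A < A := by
          calc (ENNReal.ofReal μ * ∫⁻ t, W t) ^ q * A < 1 * A :=
                ENNReal.mul_lt_mul_left h0 hAfin.ne (ENNReal.rpow_lt_one hrlt hq0)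
            _ = A := one_mul A
        exact absurd step (not_le.2 hlt)
      rw [eLpNorm_eq_lintegral_rpow_enorm_toReal hp0 hptop]
      rw [show p.toReal = q from rfl, show (∫⁻ x, ‖w x‖ₑ ^ q) = A from hAeq, hA0,
        ENNReal.zero_rpow_of_pos (by positivity)]
  have hzero := (eLpNorm_eq_zero_iff hw.1 hp0).1 heLp
  filter_upwards [hzero] with x hx
  have : u x - v x = 0 := hx
  linarith

/-- Equivariance of convolution with a radial kernel under Euclidean motions. -/
lemma PsiAux.conv_comp (ω : E2 → ℝ)
    (hrad : ∀ (r : E2 ≃ₗᵢ[ℝ] E2) (x : E2), ω (r x) = ω x)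
    (h : E2 → ℝ) (a : E2) (r : E2 ≃ₗᵢ[ℝ] E2) (x : E2) :
    (ω ⋆ fun y => h (r.symm (y - a))) x = (ω ⋆ h) (r.symm (x - a)) := by
  rw [convolution_def, convolution_def]
  simp only [ContinuousLinearMap.lsmul_apply, smul_eq_mul]
  have hr : ∀ t : E2, r.symm (x - t - a) = r.symm (x - a) - r.symm t := by
    intro t
    rw [← r.symm.map_sub]
    congr 1
    abel
  simp_rw [hr]
  calc ∫ t, ω t * h (r.symm (x - a) - r.symm t)
      = ∫ s, ω (r s) * h (r.symm (x - a) - r.symm (r s)) :=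
        (r.measurePreserving.integral_comp
          (r.toHomeomorph.measurableEmbedding)
          (fun t => ω t * h (r.symm (x - a) - r.symm t))).symm
    _ = ∫ s, ω s * h (r.symm (x - a) - s) := by
        refine integral_congr_ae (Filter.Eventually.of_forall fun s => ?_)
        simp only [r.symm_apply_apply, hrad r]

theorem Psi_equivariant
    (p : ℝ≥0∞) (hp : 1 ≤ p)
    (ω : EuclideanSpace ℝ (Fin 2) → ℝ) (hω : Integrable ω)
    (hrad : ∀ (r : EuclideanSpace ℝ (Fin 2) ≃ₗᵢ[ℝ] EuclideanSpace ℝ (Fin 2))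
      (x : EuclideanSpace ℝ (Fin 2)), ω (r x) = ω x)
    (f : ℝ → ℝ) (hf : LipschitzWith 1 f) (hf0 : f 0 = 0)
    (μ : ℝ) (hμ0 : 0 < μ) (hμ : μ * (∫ x, |ω x|) < 1)
    (Ψ : (EuclideanSpace ℝ (Fin 2) → ℝ) → (EuclideanSpace ℝ (Fin 2) → ℝ))
    (hΨmem : ∀ I, MemLp I p volume → MemLp (Ψ I) p volume)
    (hΨ : ∀ I, MemLp I p volume →
      Ψ I =ᵐ[volume] fun x => I x + μ * (ω ⋆ (f ∘ Ψ I)) x) :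
    ∀ I, MemLp I p volume →
      ∀ (a : EuclideanSpace ℝ (Fin 2))
        (r : EuclideanSpace ℝ (Fin 2) ≃ₗᵢ[ℝ] EuclideanSpace ℝ (Fin 2)),
        Ψ (fun x => I (r.symm (x - a))) =ᵐ[volume] fun x => Ψ I (r.symm (x - a)) := by
  intro I hI a r
  set φ : E2 → E2 := fun x => r.symm (x - a) with hφdef
  have hφ : MeasurePreserving φ volume volume :=
    r.symm.measurePreserving.comp (measurePreserving_sub_right volume a)
  have hIφ : MemLp (fun x => I (φ x)) p volume := hI.comp_measurePreserving hφ
  set u : E2 → ℝ := Ψ I with hudef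
  have hu : MemLp u p volume := hΨmem I hI
  have huφ : MemLp (fun x => u (φ x)) p volume := hu.comp_measurePreserving hφ
  have hΨIφ : MemLp (Ψ fun x => I (φ x)) p volume := hΨmem _ hIφ
  -- `u ∘ φ` satisfies the fixed point equation for input `I ∘ φ`
  have e2 : (fun x => u (φ x)) =ᵐ[volume]
      fun x => I (φ x) + μ * (ω ⋆ (f ∘ fun y => u (φ y))) x := by
    have base := hΨ I hI
    have pull : (fun x => u (φ x)) =ᵐ[volume]
        fun x => I (φ x) + μ * (ω ⋆ (f ∘ u)) (φ x) :=
      hφ.quasiMeasurePreserving.ae_eq_comp base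
    refine pull.trans (Filter.Eventually.of_forall fun x => ?_)
    have hc := PsiAux.conv_comp ω hrad (f ∘ u) a r x
    simp only [hφdef]
    rw [← hc]
    rfl
  -- conclude by uniqueness
  have e1 := hΨ _ hIφ
  exact PsiAux.unique hp hω hf hμ0 hμ hΨIφ huφ
    (hf.comp_memLp hf0 hΨIφ) (hf.comp_memLp hf0 huφ) e1 e2

end
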